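/- Let B ⊆ ℝ^d be a nonempty compact convex set, let c ∈ ℝ^d be a nonzero vector, and set γ_min = min_{x ∈ B} ⟨c, x⟩ and γ_max = max_{x ∈ B} ⟨c, x⟩. Let γ₁, γ₂ be real numbers with γ_min < γ₁ < γ₂ < γ_max. Then there exist a point x₀ ∈ B and a number α with 0 < α < 1 such that the set A = {α·x + (1−α)·x₀ : x ∈ B} satisfies A ⊆ B, min_{x ∈ A} ⟨c, x⟩ = γ₁, and max_{x ∈ A} ⟨c, x⟩ = γ₂. -/

import Mathlib

theorem stmt_9 (d : ℕ) (B : Set (Fin d → ℝ)) (hBne : B.Nonempty)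
    (hBcomp : IsCompact B) (hBconv : Convex ℝ B)
    (c : Fin d → ℝ) (hc : c ≠ 0)
    (γmin γmax : ℝ)
    (hmin : IsLeast ((fun x : Fin d → ℝ => ∑ j, c j * x j) '' B) γmin)
    (hmax : IsGreatest ((fun x : Fin d → ℝ => ∑ j, c j * x j) '' B) γmax)
    (γ₁ γ₂ : ℝ) (h₁ : γmin < γ₁) (h₁₂ : γ₁ < γ₂) (h₂ : γ₂ < γmax) :
    ∃ x₀ ∈ B, ∃ α : ℝ, 0 < α ∧ α < 1 ∧
      (fun x : Fin d → ℝ => α • x + (1 - α) • x₀) '' B ⊆ B ∧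
      IsLeast ((fun x : Fin d → ℝ => ∑ j, c j * x j) ''
        ((fun x : Fin d → ℝ => α • x + (1 - α) • x₀) '' B)) γ₁ ∧
      IsGreatest ((fun x : Fin d → ℝ => ∑ j, c j * x j) ''
        ((fun x : Fin d → ℝ => α • x + (1 - α) • x₀) '' B)) γ₂ := by
  set f : (Fin d → ℝ) → ℝ := fun x => ∑ j, c j * x j with hf
  have flin : ∀ (a b : ℝ) (x y : Fin d → ℝ),
      f (a • x + b • y) = a * f x + b * f y := by
    intro a b x y
    simp only [hf, Pi.add_apply, Pi.smul_apply, smul_eq_mul, mul_add,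
      Finset.sum_add_distrib, Finset.mul_sum]
    congr 1 <;> exact Finset.sum_congr rfl (fun j _ => by ring)
  obtain ⟨xm, hxm, hfxm⟩ := hmin.1
  obtain ⟨xM, hxM, hfxM⟩ := hmax.1
  have hD : (0:ℝ) < γmax - γmin := by linarith
  set α : ℝ := (γ₂ - γ₁) / (γmax - γmin) with hα
  have hα0 : 0 < α := div_pos (by linarith) hD
  have hα1 : α < 1 := (div_lt_one hD).2 (by linarith)
  set s : ℝ := (γ₁ - γmin) / ((1 - α) * (γmax - γmin)) with hs
  have hE : (0:ℝ) < (1 - α) * (γmax - γmin) := mul_pos (by linarith) hD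
  have hs0 : 0 ≤ s := le_of_lt (div_pos (by linarith) hE)
  have hs1 : s ≤ 1 := by
    rw [hs, div_le_one hE]
    have : (1 - α) * (γmax - γmin) = γmax - γmin - (γ₂ - γ₁) := by
      rw [sub_mul, one_mul, hα, div_mul_cancel₀ _ hD.ne']
    rw [this]; linarith
  set x₀ : Fin d → ℝ := (1 - s) • xm + s • xM with hx₀
  have hx₀B : x₀ ∈ B := hBconv hxm hxM (by linarith) hs0 (by ring)
  have hfx₀ : f x₀ = (1 - s) * γmin + s * γmax := by
    rw [hx₀, flin, hfxm, hfxM]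
  have key : ∀ x, α * f x + (1 - α) * f x₀ = α * (f x - γmin) + γ₁ := by
    intro x
    rw [hfx₀]
    have hαγ : α * (γmax - γmin) = γ₂ - γ₁ := by rw [hα]; exact div_mul_cancel₀ _ hD.ne'
    have hsγ : s * ((1 - α) * (γmax - γmin)) = γ₁ - γmin := by rw [hs]; exact div_mul_cancel₀ _ hE.ne'
    nlinarith [hαγ, hsγ]
  have hmink : α * f xm + (1 - α) * f x₀ = γ₁ := by rw [key, hfxm]; ring
  have hmaxk : α * f xM + (1 - α) * f x₀ = γ₂ := by
    rw [key, hfxM]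
    have hαγ : α * (γmax - γmin) = γ₂ - γ₁ := by rw [hα]; exact div_mul_cancel₀ _ hD.ne'
    linarith
  refine ⟨x₀, hx₀B, α, hα0, hα1, ?_, ?_, ?_⟩
  · rintro _ ⟨x, hx, rfl⟩
    exact hBconv hx hx₀B (le_of_lt hα0) (by linarith) (by ring)
  · constructor
    · exact ⟨_, ⟨xm, hxm, rfl⟩, by rw [flin]; exact hmink⟩
    · rintro y ⟨_, ⟨x, hx, rfl⟩, rfl⟩
      rw [flin]
      have := hmin.2 ⟨x, hx, rfl⟩
      rw [key]
      nlinarith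
  · constructor
    · exact ⟨_, ⟨xM, hxM, rfl⟩, by rw [flin]; exact hmaxk⟩
    · rintro y ⟨_, ⟨x, hx, rfl⟩, rfl⟩
      rw [flin]
      have := hmax.2 ⟨x, hx, rfl⟩
      rw [key]
      have hαγ : α * (γmax - γmin) = γ₂ - γ₁ := by rw [hα]; exact div_mul_cancel₀ _ hD.ne'
      nlinarith
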